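/- Let k be an algebraically closed field of characteristic 2 and A = kC_2 the group algebra of the cyclic group of order 2, viewed as a module over itself. Then the canonical trace ⟨·⟩ : End(A) → k is not an ambidextrous trace: there exists f ∈ End_{kC_2}(A ⊗ A) with ⟨tr_L(f)⟩ = 1 but ⟨tr_R(f)⟩ = 0. -/

import Mathlib

open TensorProduct

/-- The right partial trace of `f : V ⊗ V → V ⊗ V`, computed with respect to the
basis `b`:  `tr_R(f)(v) = ∑ i (id ⊗ b.coord i)(f(v ⊗ b i))`. -/
noncomputable def ptrR {k : Type*} [Field k] {V : Type*} [AddCommGroup V] [Module k V]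
    {ι : Type*} [Fintype ι] (b : Module.Basis ι k V)
    (f : V ⊗[k] V →ₗ[k] V ⊗[k] V) : V →ₗ[k] V :=
  ∑ i : ι, (TensorProduct.rid k V).toLinearMap
      ∘ₗ (TensorProduct.map LinearMap.id (b.coord i))
      ∘ₗ f ∘ₗ ((TensorProduct.mk k V V).flip (b i))

/-- The left partial trace of `f : V ⊗ V → V ⊗ V`, computed with respect to the
basis `b`:  `tr_L(f)(v) = ∑ i (b.coord i ⊗ id)(f(b i ⊗ v))`. -/
noncomputable def ptrL {k : Type*} [Field k] {V : Type*} [AddCommGroup V] [Module k V]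
    {ι : Type*} [Fintype ι] (b : Module.Basis ι k V)
    (f : V ⊗[k] V →ₗ[k] V ⊗[k] V) : V →ₗ[k] V :=
  ∑ i : ι, (TensorProduct.lid k V).toLinearMap
      ∘ₗ (TensorProduct.map (b.coord i) LinearMap.id)
      ∘ₗ f ∘ₗ (TensorProduct.mk k V V (b i))

/-- The action of the generator `g` of `C₂` on the regular module `A = kC₂`,
in the basis `v₁, v₂` with `g⬝v₁ = v₁` and `g⬝v₂ = v₁ + v₂`. -/
noncomputable def gAct (k : Type*) [Field k] : (Fin 2 → k) →ₗ[k] (Fin 2 → k) :=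
  Matrix.toLin' !![1, 1; 0, 1]

noncomputable def wMap (k : Type*) [Field k] :
    (Fin 2 → k) →ₗ[k] (Fin 2 → k) ⊗[k] (Fin 2 → k) :=
  (LinearMap.proj 0).smulRight
      ((Pi.single 0 1 : Fin 2 → k) ⊗ₜ[k] (Pi.single 1 1 : Fin 2 → k)
        + (Pi.single 1 1 : Fin 2 → k) ⊗ₜ[k] (Pi.single 0 1 : Fin 2 → k))
  + (LinearMap.proj 1).smulRight
      ((Pi.single 1 1 : Fin 2 → k) ⊗ₜ[k] (Pi.single 0 1 : Fin 2 → k)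
        + (Pi.single 1 1 : Fin 2 → k) ⊗ₜ[k] (Pi.single 1 1 : Fin 2 → k))

noncomputable def fMap (k : Type*) [Field k] :
    (Fin 2 → k) ⊗[k] (Fin 2 → k) →ₗ[k] (Fin 2 → k) ⊗[k] (Fin 2 → k) :=
  TensorProduct.lift ((LinearMap.proj (1 : Fin 2)).smulRight (wMap k))

lemma fMap_tmul (k : Type*) [Field k] (x y : Fin 2 → k) :
    fMap k (x ⊗ₜ y) = x 1 • wMap k y := rfl

lemma gAct_apply (k : Type*) [Field k] (x : Fin 2 → k) (i : Fin 2) :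
    gAct k x i = !![1,1;0,1] i 0 * x 0 + !![1,1;0,1] i 1 * x 1 := by
  simp [gAct, Matrix.toLin'_apply, Matrix.mulVec, dotProduct, Fin.sum_univ_two]

lemma gAct0 (k : Type*) [Field k] : gAct k (Pi.single 0 1) = (Pi.single 0 1 : Fin 2 → k) := by
  funext i; fin_cases i <;> simp [gAct_apply]

lemma gAct1 (k : Type*) [Field k] :
    gAct k (Pi.single 1 1) = (Pi.single 0 1 : Fin 2 → k) + Pi.single 1 1 := by
  funext i; fin_cases i <;> simp [gAct_apply]

lemma w0 (k : Type*) [Field k] :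
    wMap k (Pi.single 0 1) = (Pi.single 0 1 : Fin 2 → k) ⊗ₜ[k] (Pi.single 1 1 : Fin 2 → k)
        + (Pi.single 1 1 : Fin 2 → k) ⊗ₜ[k] (Pi.single 0 1 : Fin 2 → k) := by
  simp [wMap]

lemma w1 (k : Type*) [Field k] :
    wMap k (Pi.single 1 1) = (Pi.single 1 1 : Fin 2 → k) ⊗ₜ[k] (Pi.single 0 1 : Fin 2 → k)
        + (Pi.single 1 1 : Fin 2 → k) ⊗ₜ[k] (Pi.single 1 1 : Fin 2 → k) := by
  simp [wMap]

theorem stmt16 (k : Type*) [Field k] [IsAlgClosed k] [CharP k 2] :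
    ∃ f : (Fin 2 → k) ⊗[k] (Fin 2 → k) →ₗ[k] (Fin 2 → k) ⊗[k] (Fin 2 → k),
      f ∘ₗ TensorProduct.map (gAct k) (gAct k)
          = TensorProduct.map (gAct k) (gAct k) ∘ₗ f ∧
      ptrL (Pi.basisFun k (Fin 2)) f (Pi.single 0 1) = (Pi.single 0 1 : Fin 2 → k) ∧
      ptrR (Pi.basisFun k (Fin 2)) f (Pi.single 0 1) = (0 : Fin 2 → k) := by
  have h2 : (1 : k) + 1 = 0 := by
    have := CharP.cast_eq_zero k 2; rw [show ((2:ℕ):k) = 1 + 1 by norm_num] at this; exact this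
  refine ⟨fMap k, ?_, ?_, ?_⟩
  · apply TensorProduct.ext
    apply Module.Basis.ext (Pi.basisFun k (Fin 2)); intro i
    apply Module.Basis.ext (Pi.basisFun k (Fin 2)); intro j
    have hz : ∀ z : (Fin 2 → k) ⊗[k] (Fin 2 → k), z + z = 0 := fun z => by
      rw [← one_smul k z, ← add_smul, h2, zero_smul]
    fin_cases i <;> fin_cases j <;>
      simp only [Fin.mk_zero, Fin.mk_one, LinearMap.compr₂ₛₗ_apply, TensorProduct.mk_apply,
        LinearMap.comp_apply, Pi.basisFun_apply, TensorProduct.map_tmul, fMap_tmul,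
        gAct0, gAct1, w0, w1, map_add, tmul_add, add_tmul, Pi.add_apply,
        Pi.single_eq_same, ne_eq, zero_ne_one, one_ne_zero, not_false_eq_true,
        Pi.single_eq_of_ne, one_smul, zero_smul, smul_zero, zero_add, add_zero,
        map_zero]
    all_goals (rw [← sub_eq_zero]; abel_nf; rw [neg_smul, neg_eq_zero, two_zsmul]; exact hz _)
  · simp only [ptrL, LinearMap.sum_apply, LinearMap.add_apply, LinearMap.comp_apply, Fin.sum_univ_two,
      Pi.basisFun_apply, TensorProduct.mk_apply, fMap_tmul, Module.Basis.coord_apply,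
      Pi.basisFun_repr, w0, w1, Pi.single_eq_same, ne_eq, zero_ne_one, one_ne_zero,
      not_false_eq_true, Pi.single_eq_of_ne, one_smul, zero_smul, smul_zero,
      LinearMap.map_add, LinearMap.map_zero, TensorProduct.map_tmul, LinearEquiv.coe_coe,
      TensorProduct.lid_tmul, LinearMap.id_coe, id_eq, zero_tmul, zero_add, add_zero]
  · simp only [ptrR, LinearMap.sum_apply, LinearMap.add_apply, LinearMap.comp_apply, LinearMap.flip_apply,
      Pi.basisFun_apply, TensorProduct.mk_apply, fMap_tmul, Module.Basis.coord_apply,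
      Pi.basisFun_repr, Fin.sum_univ_two, w0, w1, Pi.single_eq_same, ne_eq, zero_ne_one,
      one_ne_zero, not_false_eq_true, Pi.single_eq_of_ne, one_smul, zero_smul, smul_zero,
      LinearMap.map_add, LinearMap.map_zero, TensorProduct.map_tmul, LinearEquiv.coe_coe,
      TensorProduct.rid_tmul, LinearMap.id_coe, id_eq, zero_add, add_zero]
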